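/- Let L and X be as above (graph on vertex set L). Then X satisfies the local quadrangle condition: for any x, y, z, t ∈ L with d(x,y) = d(x,z) = 2, d(x,t) = 3 and d(y,t) = d(z,t) = 1, there exists u ∈ L with d(x,u) = d(y,u) = d(z,u) = 1. -/

import Mathlib

open SimpleGraph

/-- The graph `X` on the vertex set `L`, with an edge between `x` and `y` iff
`x ≤ y ≤ x + 1` or `y ≤ x ≤ y + 1`, where `x + 1 = T x` for the order automorphism `T`
generating the `ℤ`-action. -/
def stepGraph {L : Type*} [Lattice L] (T : L ≃o L) : SimpleGraph L where
  Adj x y := x ≠ y ∧ ((x ≤ y ∧ y ≤ T x) ∨ (y ≤ x ∧ x ≤ T y))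
  symm := ⟨by rintro x y ⟨hne, h⟩; exact ⟨hne.symm, h.symm⟩⟩
  loopless := ⟨by rintro x ⟨hne, -⟩; exact hne rfl⟩

section Aux
variable {L : Type*} [Lattice L] {T : L ≃o L}

private lemma p0 (a : L) : (T^(0:ℕ)) a = a := rfl
private lemma p1 (a : L) : (T^(1:ℕ)) a = T a := by rw [pow_one]
private lemma powS (n : ℕ) (a : L) : (T^(n+1)) a = T ((T^n) a) := by rw [pow_succ']; rfl
private lemma powS' (n : ℕ) (a : L) : (T^(n+1)) a = (T^n) (T a) := by rw [pow_succ]; rfl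
private lemma p2 (a : L) : (T^(2:ℕ)) a = T (T a) := by rw [powS, p1]
private lemma p3 (a : L) : (T^(3:ℕ)) a = T (T (T a)) := by rw [powS, p2]

private lemma le_pow (hinc : ∀ x : L, x < T x) : ∀ (n : ℕ) (a : L), a ≤ (T^n) a
  | 0, a => le_rfl
  | n+1, a => ((le_pow hinc n a).trans (by rw [powS]; exact (hinc _).le))

private lemma pow_le_pow_apply (hinc : ∀ x : L, x < T x) {p n : ℕ} (h : p ≤ n) (a : L) :
    (T^p) a ≤ (T^n) a := by
  obtain ⟨k, rfl⟩ := Nat.exists_eq_add_of_le h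
  calc (T^p) a ≤ (T^p) ((T^k) a) := (T^p).monotone (le_pow hinc k a)
    _ = (T^(p+k)) a := by rw [pow_add]; rfl

private lemma walk_pair {a b : L} (w : (stepGraph T).Walk a b) :
    ∃ p q : ℕ, p + q ≤ w.length ∧ b ≤ (T^p) a ∧ a ≤ (T^q) b := by
  induction w with
  | nil => exact ⟨0, 0, by simp, le_rfl, le_rfl⟩
  | @cons a c b h w ih =>
    obtain ⟨p, q, hpq, h1, h2⟩ := ih
    obtain ⟨hne, ⟨hac, hca⟩ | ⟨hca, hac⟩⟩ := h
    · refine ⟨p+1, q, by change _ ≤ w.length + 1; omega, ?_, hac.trans h2⟩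
      · calc b ≤ (T^p) c := h1
          _ ≤ (T^p) (T a) := (T^p).monotone hca
          _ = (T^(p+1)) a := (powS' p a).symm
    · refine ⟨p, q+1, by change _ ≤ w.length + 1; omega, h1.trans ((T^p).monotone hca), ?_⟩
      calc a ≤ T c := hac
        _ ≤ T ((T^q) b) := T.monotone h2
        _ = (T^(q+1)) b := (powS q b).symm

private lemma chain_walk (hinc : ∀ x : L, x < T x) :
    ∀ (k : ℕ) (a m : L), a ≤ m → m ≤ (T^k) a → ∃ w : (stepGraph T).Walk a m, w.length ≤ k := by
  intro k
  induction k with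
  | zero =>
    intro a m h1 h2
    rw [p0] at h2
    have he : a = m := le_antisymm h1 h2
    subst he
    exact ⟨Walk.nil, by simp⟩
  | succ k ih =>
    intro a m h1 h2
    set a' := m ⊓ T a with ha'
    have haa' : a ≤ a' := le_inf h1 (hinc a).le
    have ha'm : a' ≤ m := inf_le_left
    have ha'Ta : a' ≤ T a := inf_le_right
    have hm' : m ≤ (T^k) a' := by
      rw [ha', OrderIso.map_inf]
      refine le_inf (le_pow hinc k m) ?_
      rw [← powS']
      exact h2
    
    by_cases hea : a = a'
    · rw [← hea] at hm'
      obtain ⟨w, hw⟩ := ih a m h1 hm'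
      exact ⟨w, by omega⟩
    · obtain ⟨w, hw⟩ := ih a' m ha'm hm'
      exact ⟨Walk.cons ⟨hea, Or.inl ⟨haa', ha'Ta⟩⟩ w, by change w.length + 1 ≤ _; omega⟩

private lemma dist_le_pair (hinc : ∀ x : L, x < T x) {a b : L} {p q : ℕ}
    (h1 : b ≤ (T^p) a) (h2 : a ≤ (T^q) b) : (stepGraph T).dist a b ≤ p + q := by
  obtain ⟨w1, hw1⟩ := chain_walk hinc p a (a ⊔ b) le_sup_left (sup_le (le_pow hinc p a) h1)
  obtain ⟨w2, hw2⟩ := chain_walk hinc q b (a ⊔ b) le_sup_right (sup_le h2 (le_pow hinc q b))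
  calc (stepGraph T).dist a b ≤ (w1.append w2.reverse).length := dist_le _
    _ = w1.length + w2.length := by simp
    _ ≤ p + q := by omega

end Aux

section Struct
variable {L : Type*} [Lattice L] {T : L ≃o L}

private lemma lemA (hinc : ∀ x : L, x < T x) (x y z : L)
    (h1 : x ≤ y) (h2 : x ≤ z) (h3 : y ≤ T (T x)) (h4 : z ≤ T (T x))
    (h5 : y ≤ T z) (h6 : z ≤ T y) (h7 : ¬ y ≤ T x) (h8 : ¬ z ≤ T x) :
    ∃ u, (stepGraph T).Adj x u ∧ (stepGraph T).Adj y u ∧ (stepGraph T).Adj z u := by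
  refine ⟨y ⊓ z ⊓ T x, ?_, ?_, ?_⟩
  · have hyTu : y ≤ T (y ⊓ z ⊓ T x) := by
      rw [OrderIso.map_inf, OrderIso.map_inf]
      exact le_inf (le_inf (hinc y).le h5) h3
    exact ⟨fun h => h7 (by rw [← h] at hyTu; exact hyTu),
      Or.inl ⟨le_inf (le_inf h1 h2) (hinc x).le, inf_le_right⟩⟩
  · have hyTu : y ≤ T (y ⊓ z ⊓ T x) := by
      rw [OrderIso.map_inf, OrderIso.map_inf]
      exact le_inf (le_inf (hinc y).le h5) h3
    exact ⟨fun h => h7 (h ▸ inf_le_right), Or.inr ⟨(inf_le_left.trans inf_le_left), hyTu⟩⟩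
  · have hzTu : z ≤ T (y ⊓ z ⊓ T x) := by
      rw [OrderIso.map_inf, OrderIso.map_inf]
      exact le_inf (le_inf h6 (hinc z).le) h4
    exact ⟨fun h => h8 (h ▸ inf_le_right), Or.inr ⟨(inf_le_left.trans inf_le_right), hzTu⟩⟩

private lemma lemA' (hinc : ∀ x : L, x < T x) (x y z : L)
    (h1 : y ≤ x) (h2 : z ≤ x) (h3 : x ≤ T (T y)) (h4 : x ≤ T (T z))
    (h5 : y ≤ T z) (h6 : z ≤ T y) (h7 : ¬ x ≤ T y) (h8 : ¬ x ≤ T z) :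
    ∃ u, (stepGraph T).Adj x u ∧ (stepGraph T).Adj y u ∧ (stepGraph T).Adj z u := by
  have hsymm : ∀ a : L, T.symm a ≤ a := fun a => T.symm_apply_le.mpr (hinc a).le
  refine ⟨y ⊔ z ⊔ T.symm x, ?_, ?_, ?_⟩
  · have huTy : y ⊔ z ⊔ T.symm x ≤ T y :=
      sup_le (sup_le (hinc y).le h6) (T.symm_apply_le.mpr h3)
    refine ⟨fun h => h7 (by rw [h]; exact huTy), Or.inr ⟨sup_le (sup_le h1 h2) (hsymm x), ?_⟩⟩
    rw [OrderIso.map_sup, OrderIso.map_sup, T.apply_symm_apply]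
    exact le_sup_right
  · have huTy : y ⊔ z ⊔ T.symm x ≤ T y :=
      sup_le (sup_le (hinc y).le h6) (T.symm_apply_le.mpr h3)
    exact ⟨fun h => h7 (T.symm_apply_le.mp (le_sup_right.trans (le_of_eq h.symm))),
      Or.inl ⟨le_sup_left.trans le_sup_left, huTy⟩⟩
  · have huTz : y ⊔ z ⊔ T.symm x ≤ T z :=
      sup_le (sup_le h5 (hinc z).le) (T.symm_apply_le.mpr h4)
    exact ⟨fun h => h8 (T.symm_apply_le.mp (le_sup_right.trans (le_of_eq h.symm))),
      Or.inl ⟨le_sup_right.trans le_sup_left, huTz⟩⟩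

private lemma lemB (hinc : ∀ x : L, x < T x) (x y z : L)
    (hyx : y ≤ T x) (hzx : z ≤ T x) (hxy : x ≤ T y) (hxz : x ≤ T z)
    (hyz : y ≤ T z) (hzy : z ≤ T y) (n1 : ¬ x ≤ y) (n2 : ¬ y ≤ x) (n3 : ¬ x ≤ z) :
    ∃ u, (stepGraph T).Adj x u ∧ (stepGraph T).Adj y u ∧ (stepGraph T).Adj z u := by
  refine ⟨x ⊔ y ⊔ z, ?_, ?_, ?_⟩
  · exact ⟨fun h => n2 (by rw [h]; exact le_sup_right.trans le_sup_left),
      Or.inl ⟨le_sup_left.trans le_sup_left, sup_le (sup_le (hinc x).le hyx) hzx⟩⟩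
  · exact ⟨fun h => n1 (by rw [h]; exact le_sup_left.trans le_sup_left),
      Or.inl ⟨le_sup_right.trans le_sup_left, sup_le (sup_le hxy (hinc y).le) hzy⟩⟩
  · exact ⟨fun h => n3 (by rw [h]; exact le_sup_left.trans le_sup_left),
      Or.inl ⟨le_sup_right, sup_le (sup_le hxz hyz) (hinc z).le⟩⟩

private lemma lemB' (hinc : ∀ x : L, x < T x) (x y z : L)
    (hxy : x ≤ T y) (hxz : x ≤ T z) (hyx : y ≤ T x) (hyz : y ≤ T z)
    (hzx : z ≤ T x) (hzy : z ≤ T y) (n1 : ¬ x ≤ y) (n2 : ¬ y ≤ x) (n3 : ¬ z ≤ x) :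
    ∃ u, (stepGraph T).Adj x u ∧ (stepGraph T).Adj y u ∧ (stepGraph T).Adj z u := by
  refine ⟨x ⊓ y ⊓ z, ?_, ?_, ?_⟩
  · refine ⟨fun h => n1 (by rw [h]; exact inf_le_left.trans inf_le_right), Or.inr ⟨inf_le_left.trans inf_le_left, ?_⟩⟩
    rw [OrderIso.map_inf, OrderIso.map_inf]
    exact le_inf (le_inf (hinc x).le hxy) hxz
  · refine ⟨fun h => n2 (by rw [h]; exact inf_le_left.trans inf_le_left), Or.inr ⟨inf_le_left.trans inf_le_right, ?_⟩⟩
    rw [OrderIso.map_inf, OrderIso.map_inf]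
    exact le_inf (le_inf hyx (hinc y).le) hyz
  · refine ⟨fun h => n3 (by rw [h]; exact inf_le_left.trans inf_le_left), Or.inr ⟨inf_le_right, ?_⟩⟩
    rw [OrderIso.map_inf, OrderIso.map_inf]
    exact le_inf (le_inf hzx hzy) (hinc z).le

private lemma lemC (hinc : ∀ x : L, x < T x) (x y z : L)
    (hxz : x ≤ z) (hyz : y ≤ z) (hyTx : y ≤ T x) (hxTy : x ≤ T y)
    (hz2x : z ≤ T (T x)) (hz2y : z ≤ T (T y))
    (n1 : ¬ y ≤ x) (n2 : ¬ x ≤ y) (n3 : ¬ z ≤ T x) :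
    ∃ u, (stepGraph T).Adj x u ∧ (stepGraph T).Adj y u ∧ (stepGraph T).Adj z u := by
  have hxu : x ≤ z ⊓ T x ⊓ T y := le_inf (le_inf hxz (hinc x).le) hxTy
  have hyu : y ≤ z ⊓ T x ⊓ T y := le_inf (le_inf hyz hyTx) (hinc y).le
  refine ⟨z ⊓ T x ⊓ T y, ?_, ?_, ?_⟩
  · exact ⟨fun h => n1 (by rw [h]; exact hyu), Or.inl ⟨hxu, inf_le_left.trans inf_le_right⟩⟩
  · exact ⟨fun h => n2 (by rw [h]; exact hxu), Or.inl ⟨hyu, inf_le_right⟩⟩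
  · refine ⟨fun h => n3 (h ▸ (inf_le_left.trans inf_le_right)), Or.inr ⟨inf_le_left.trans inf_le_left, ?_⟩⟩
    rw [OrderIso.map_inf, OrderIso.map_inf]
    exact le_inf (le_inf (hinc z).le hz2x) hz2y

private lemma lemC' (hinc : ∀ x : L, x < T x) (x y z : L)
    (hzx : z ≤ x) (hzy : z ≤ y) (hxTy : x ≤ T y) (hyTx : y ≤ T x)
    (hx2z : x ≤ T (T z)) (hy2z : y ≤ T (T z))
    (n1 : ¬ x ≤ y) (n2 : ¬ y ≤ x) (n3 : ¬ x ≤ T z) :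
    ∃ u, (stepGraph T).Adj x u ∧ (stepGraph T).Adj y u ∧ (stepGraph T).Adj z u := by
  have hsymm : ∀ a : L, T.symm a ≤ a := fun a => T.symm_apply_le.mpr (hinc a).le
  have hux : z ⊔ T.symm x ⊔ T.symm y ≤ x := sup_le (sup_le hzx (hsymm x)) (T.symm_apply_le.mpr hyTx)
  have huy : z ⊔ T.symm x ⊔ T.symm y ≤ y := sup_le (sup_le hzy (T.symm_apply_le.mpr hxTy)) (hsymm y)
  refine ⟨z ⊔ T.symm x ⊔ T.symm y, ?_, ?_, ?_⟩
  · refine ⟨fun h => n1 (by rw [h]; exact huy), Or.inr ⟨hux, ?_⟩⟩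
    rw [OrderIso.map_sup, OrderIso.map_sup, T.apply_symm_apply, T.apply_symm_apply]
    exact le_sup_right.trans le_sup_left
  · refine ⟨fun h => n2 (by rw [h]; exact hux), Or.inr ⟨huy, ?_⟩⟩
    rw [OrderIso.map_sup, OrderIso.map_sup, T.apply_symm_apply, T.apply_symm_apply]
    exact le_sup_right
  · refine ⟨fun h => n3 (T.symm_apply_le.mp ((le_sup_right.trans le_sup_left : T.symm x ≤ z ⊔ T.symm x ⊔ T.symm y).trans (le_of_eq h.symm))), Or.inl ⟨le_sup_left.trans le_sup_left, ?_⟩⟩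
    exact sup_le (sup_le (hinc z).le (T.symm_apply_le.mpr hx2z)) (T.symm_apply_le.mpr hy2z)

end Struct

section Classify
variable {L : Type*} [Lattice L] {T : L ≃o L}

private lemma classQ0 (x t w : L)
    (Mt : ∀ p q : ℕ, t ≤ (T^p) x → x ≤ (T^q) t → 3 ≤ p + q)
    (hxt : x ≤ t)
    (pair : ∃ p q : ℕ, p + q ≤ 2 ∧ w ≤ (T^p) x ∧ x ≤ (T^q) w)
    (hadj : (w ≤ t ∧ t ≤ T w) ∨ (t ≤ w ∧ w ≤ T t)) :
    w ≤ t ∧ t ≤ T w ∧ x ≤ w ∧ w ≤ T (T x) ∧ ¬ w ≤ T x := by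
  obtain ⟨p, q, hpq, h1, h2⟩ := pair
  rcases hadj with ⟨hwt, htw⟩ | ⟨htw, hwt⟩
  · have hp : 3 ≤ p + 1 + 0 :=
      Mt (p+1) 0 (by rw [powS]; exact htw.trans (T.monotone h1)) (by rw [p0]; exact hxt)
    have hp2 : p = 2 := by omega
    have hq0 : q = 0 := by omega
    subst hp2; subst hq0
    rw [p2] at h1; rw [p0] at h2
    refine ⟨hwt, htw, h2, h1, fun h => ?_⟩
    have := Mt 2 0 (by rw [p2]; exact htw.trans (T.monotone h)) (by rw [p0]; exact hxt)
    omega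
  · exfalso
    have := Mt p 0 (htw.trans h1) (by rw [p0]; exact hxt)
    omega

private lemma classQ1 (hinc : ∀ x : L, x < T x) (x t w : L)
    (Mt : ∀ p q : ℕ, t ≤ (T^p) x → x ≤ (T^q) t → 3 ≤ p + q)
    (ht1 : t ≤ T (T x)) (ht2 : x ≤ T t)
    (pair : ∃ p q : ℕ, p + q ≤ 2 ∧ w ≤ (T^p) x ∧ x ≤ (T^q) w)
    (hadj : (w ≤ t ∧ t ≤ T w) ∨ (t ≤ w ∧ w ≤ T t)) :
    (w ≤ t ∧ t ≤ T w ∧ w ≤ T x ∧ x ≤ T w ∧ ¬ w ≤ x ∧ ¬ x ≤ w) ∨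
    (t ≤ w ∧ w ≤ T t ∧ x ≤ w ∧ w ≤ T (T x) ∧ ¬ w ≤ T x) := by
  obtain ⟨p, q, hpq, h1, h2⟩ := pair
  rcases hadj with ⟨hwt, htw⟩ | ⟨htw, hwt⟩
  · left
    have hnxt : ¬ x ≤ t := fun h => by
      have := Mt 2 0 (by rw [p2]; exact ht1) (by rw [p0]; exact h); omega
    have hnxw : ¬ x ≤ w := fun h => hnxt (h.trans hwt)
    have hnwx : ¬ w ≤ x := fun h => by
      have := Mt 1 1 (by rw [p1]; exact htw.trans (T.monotone h)) (by rw [p1]; exact ht2); omega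
    have hq : 1 ≤ q := by
      rcases Nat.eq_zero_or_pos q with h | h
      · exact absurd (by rw [h, p0] at h2; exact h2) hnxw
      · exact h
    have hp : 1 ≤ p := by
      rcases Nat.eq_zero_or_pos p with h | h
      · exact absurd (by rw [h, p0] at h1; exact h1) (by exact fun hh => hnwx hh)
      · exact h
    have hwTx : w ≤ T x := by
      have h3 : (T^p) x ≤ (T^(1:ℕ)) x := pow_le_pow_apply hinc (by omega) x
      rw [p1] at h3; exact h1.trans h3
    have hxTw : x ≤ T w := by
      have h3 : (T^q) w ≤ (T^(1:ℕ)) w := pow_le_pow_apply hinc (by omega) w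
      rw [p1] at h3; exact h2.trans h3
    exact ⟨hwt, htw, hwTx, hxTw, hnwx, hnxw⟩
  · right
    have h3 : 3 ≤ p + 1 := Mt p 1 (htw.trans h1) (by rw [p1]; exact ht2)
    have hp2 : p = 2 := by omega
    have hq0 : q = 0 := by omega
    subst hp2; subst hq0
    rw [p2] at h1; rw [p0] at h2
    refine ⟨htw, hwt, h2, h1, fun h => ?_⟩
    have := Mt 1 1 (by rw [p1]; exact htw.trans h) (by rw [p1]; exact ht2)
    omega

private lemma classQ2 (hinc : ∀ x : L, x < T x) (x t w : L)
    (Mt : ∀ p q : ℕ, t ≤ (T^p) x → x ≤ (T^q) t → 3 ≤ p + q)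
    (ht1 : t ≤ T x) (ht2 : x ≤ T (T t))
    (pair : ∃ p q : ℕ, p + q ≤ 2 ∧ w ≤ (T^p) x ∧ x ≤ (T^q) w)
    (hadj : (w ≤ t ∧ t ≤ T w) ∨ (t ≤ w ∧ w ≤ T t)) :
    (w ≤ t ∧ t ≤ T w ∧ w ≤ x ∧ x ≤ T (T w) ∧ ¬ x ≤ T w) ∨
    (t ≤ w ∧ w ≤ T t ∧ w ≤ T x ∧ x ≤ T w ∧ ¬ w ≤ x ∧ ¬ x ≤ w) := by
  obtain ⟨p, q, hpq, h1, h2⟩ := pair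
  rcases hadj with ⟨hwt, htw⟩ | ⟨htw, hwt⟩
  · left
    have h3 : 3 ≤ 1 + q := Mt 1 q (by rw [p1]; exact ht1) (h2.trans ((T^q).monotone hwt))
    have hq2 : q = 2 := by omega
    have hp0 : p = 0 := by omega
    subst hq2; subst hp0
    rw [p0] at h1; rw [p2] at h2
    refine ⟨hwt, htw, h1, h2, fun h => ?_⟩
    have := Mt 1 1 (by rw [p1]; exact ht1) (by rw [p1]; exact h.trans (T.monotone hwt))
    omega
  · right
    have hntx : ¬ t ≤ x := fun h => by
      have := Mt 0 2 (by rw [p0]; exact h) (by rw [p2]; exact ht2); omega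
    have hnwx : ¬ w ≤ x := fun h => hntx (htw.trans h)
    have hnxw : ¬ x ≤ w := fun h => by
      have := Mt 1 1 (by rw [p1]; exact ht1) (by rw [p1]; exact h.trans hwt); omega
    have hq : 1 ≤ q := by
      rcases Nat.eq_zero_or_pos q with h | h
      · exact absurd (by rw [h, p0] at h2; exact h2) hnxw
      · exact h
    have hp : 1 ≤ p := by
      rcases Nat.eq_zero_or_pos p with h | h
      · exact absurd (by rw [h, p0] at h1; exact h1) hnwx
      · exact h
    have hwTx : w ≤ T x := by
      have h3 : (T^p) x ≤ (T^(1:ℕ)) x := pow_le_pow_apply hinc (by omega) x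
      rw [p1] at h3; exact h1.trans h3
    have hxTw : x ≤ T w := by
      have h3 : (T^q) w ≤ (T^(1:ℕ)) w := pow_le_pow_apply hinc (by omega) w
      rw [p1] at h3; exact h2.trans h3
    exact ⟨htw, hwt, hwTx, hxTw, hnwx, hnxw⟩

private lemma classQ3 (x t w : L)
    (Mt : ∀ p q : ℕ, t ≤ (T^p) x → x ≤ (T^q) t → 3 ≤ p + q)
    (htx : t ≤ x)
    (pair : ∃ p q : ℕ, p + q ≤ 2 ∧ w ≤ (T^p) x ∧ x ≤ (T^q) w)
    (hadj : (w ≤ t ∧ t ≤ T w) ∨ (t ≤ w ∧ w ≤ T t)) :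
    t ≤ w ∧ w ≤ T t ∧ w ≤ x ∧ x ≤ T (T w) ∧ ¬ x ≤ T w := by
  obtain ⟨p, q, hpq, h1, h2⟩ := pair
  rcases hadj with ⟨hwt, htw⟩ | ⟨htw, hwt⟩
  · exfalso
    have := Mt 0 q (by rw [p0]; exact htx) (h2.trans ((T^q).monotone hwt))
    omega
  · have h3 : 3 ≤ 0 + (q + 1) := Mt 0 (q+1) (by rw [p0]; exact htx)
      (by rw [powS']; exact h2.trans ((T^q).monotone hwt))
    have hq2 : q = 2 := by omega
    have hp0 : p = 0 := by omega
    subst hq2; subst hp0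
    rw [p0] at h1; rw [p2] at h2
    refine ⟨htw, hwt, h1, h2, fun h => ?_⟩
    have := Mt 0 2 (by rw [p0]; exact htx) (by rw [p2]; exact h.trans (T.monotone hwt))
    omega

end Classify

/-- Lemma 3.5. The graph `X` on `L` satisfies the local quadrangle
condition: for any `x, y, z, t ∈ L` with `d(x,y) = d(x,z) = 2`, `d(x,t) = 3` and
`d(y,t) = d(z,t) = 1`, there is `u ∈ L` with `d(x,u) = d(y,u) = d(z,u) = 1`. -/
theorem stepGraph_local_quadrangle {L : Type*} [Lattice L] (T : L ≃o L)
    (hjoin : ∀ S : Set L, S.Nonempty → BddAbove S → ∃ j, IsLUB S j)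
    (hinc : ∀ x : L, x < T x)
    (hcof : ∀ x y : L, ∃ k : ℕ, (T ^ (k : ℤ))⁻¹ x ≤ y ∧ y ≤ (T ^ (k : ℤ)) x)
    (x y z t : L)
    (hxy : (stepGraph T).dist x y = 2) (hxz : (stepGraph T).dist x z = 2)
    (hxt : (stepGraph T).dist x t = 3)
    (hyt : (stepGraph T).dist y t = 1) (hzt : (stepGraph T).dist z t = 1) :
    ∃ u : L, (stepGraph T).dist x u = 1 ∧ (stepGraph T).dist y u = 1 ∧
      (stepGraph T).dist z u = 1 := by
  classical
  obtain ⟨-, hyadj⟩ := dist_eq_one_iff_adj.mp hyt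
  obtain ⟨-, hzadj⟩ := dist_eq_one_iff_adj.mp hzt
  have Mt : ∀ p q : ℕ, t ≤ (T^p) x → x ≤ (T^q) t → 3 ≤ p + q := fun p q h1 h2 => by
    have := dist_le_pair hinc h1 h2
    omega
  have reach : ∀ w : L, (stepGraph T).dist x w ≠ 0 →
      ∃ p q : ℕ, p + q ≤ (stepGraph T).dist x w ∧ w ≤ (T^p) x ∧ x ≤ (T^q) w := by
    intro w hw
    have hr : (stepGraph T).Reachable x w := by
      by_contra h
      exact hw (dist_eq_zero_iff_eq_or_not_reachable.mpr (Or.inr h))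
    obtain ⟨pw, hpw⟩ := hr.exists_walk_length_eq_dist
    obtain ⟨p, q, hpq, h1, h2⟩ := walk_pair pw
    exact ⟨p, q, by omega, h1, h2⟩
  obtain ⟨P, Q, hPQ, ht1, ht2⟩ := reach t (by rw [hxt]; omega)
  rw [hxt] at hPQ
  have pairy : ∃ p q : ℕ, p + q ≤ 2 ∧ y ≤ (T^p) x ∧ x ≤ (T^q) y := by
    obtain ⟨p, q, h, h1, h2⟩ := reach y (by rw [hxy]; omega)
    rw [hxy] at h
    exact ⟨p, q, h, h1, h2⟩
  have pairz : ∃ p q : ℕ, p + q ≤ 2 ∧ z ≤ (T^p) x ∧ x ≤ (T^q) z := by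
    obtain ⟨p, q, h, h1, h2⟩ := reach z (by rw [hxz]; omega)
    rw [hxz] at h
    exact ⟨p, q, h, h1, h2⟩
  have hPQ3 : P + Q = 3 := le_antisymm hPQ (Mt P Q ht1 ht2)
  have hQ3 : Q ≤ 3 := by omega
  clear hPQ
  interval_cases Q
  · -- Q = 0 : x ≤ t
    have hP : P = 3 := by omega
    subst hP
    rw [p0] at ht2
    obtain ⟨hy1, hy2, hy3, hy4, hy5⟩ := classQ0 x t y Mt ht2 pairy hyadj
    obtain ⟨hz1, hz2, hz3, hz4, hz5⟩ := classQ0 x t z Mt ht2 pairz hzadj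
    obtain ⟨u, a1, a2, a3⟩ := lemA hinc x y z hy3 hz3 hy4 hz4 (hy1.trans hz2) (hz1.trans hy2) hy5 hz5
    exact ⟨u, dist_eq_one_iff_adj.mpr a1, dist_eq_one_iff_adj.mpr a2, dist_eq_one_iff_adj.mpr a3⟩
  · -- Q = 1 : t ≤ T (T x), x ≤ T t
    have hP : P = 2 := by omega
    subst hP
    rw [p2] at ht1; rw [p1] at ht2
    rcases classQ1 hinc x t y Mt ht1 ht2 pairy hyadj with
      ⟨hy1, hy2, hy3, hy4, hy5, hy6⟩ | ⟨hy1, hy2, hy3, hy4, hy5⟩ <;>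
    rcases classQ1 hinc x t z Mt ht1 ht2 pairz hzadj with
      ⟨hz1, hz2, hz3, hz4, hz5, hz6⟩ | ⟨hz1, hz2, hz3, hz4, hz5⟩
    · obtain ⟨u, a1, a2, a3⟩ := lemB hinc x y z hy3 hz3 hy4 hz4 (hy1.trans hz2) (hz1.trans hy2) hy6 hy5 hz6
      exact ⟨u, dist_eq_one_iff_adj.mpr a1, dist_eq_one_iff_adj.mpr a2, dist_eq_one_iff_adj.mpr a3⟩
    · obtain ⟨u, a1, a2, a3⟩ := lemC hinc x y z hz3 (hy1.trans hz1) hy3 hy4 hz4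
        (hz2.trans (T.monotone hy2)) hy5 hy6 hz5
      exact ⟨u, dist_eq_one_iff_adj.mpr a1, dist_eq_one_iff_adj.mpr a2, dist_eq_one_iff_adj.mpr a3⟩
    · obtain ⟨u, a1, a2, a3⟩ := lemC hinc x z y hy3 (hz1.trans hy1) hz3 hz4 hy4
        (hy2.trans (T.monotone hz2)) hz5 hz6 hy5
      exact ⟨u, dist_eq_one_iff_adj.mpr a1, dist_eq_one_iff_adj.mpr a3, dist_eq_one_iff_adj.mpr a2⟩
    · obtain ⟨u, a1, a2, a3⟩ := lemA hinc x y z hy3 hz3 hy4 hz4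
        (hy2.trans (T.monotone hz1)) (hz2.trans (T.monotone hy1)) hy5 hz5
      exact ⟨u, dist_eq_one_iff_adj.mpr a1, dist_eq_one_iff_adj.mpr a2, dist_eq_one_iff_adj.mpr a3⟩
  · -- Q = 2 : t ≤ T x, x ≤ T (T t)
    have hP : P = 1 := by omega
    subst hP
    rw [p1] at ht1; rw [p2] at ht2
    rcases classQ2 hinc x t y Mt ht1 ht2 pairy hyadj with
      ⟨hy1, hy2, hy3, hy4, hy5⟩ | ⟨hy1, hy2, hy3, hy4, hy5, hy6⟩ <;>
    rcases classQ2 hinc x t z Mt ht1 ht2 pairz hzadj with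
      ⟨hz1, hz2, hz3, hz4, hz5⟩ | ⟨hz1, hz2, hz3, hz4, hz5, hz6⟩
    · obtain ⟨u, a1, a2, a3⟩ := lemA' hinc x y z hy3 hz3 hy4 hz4 (hy1.trans hz2) (hz1.trans hy2) hy5 hz5
      exact ⟨u, dist_eq_one_iff_adj.mpr a1, dist_eq_one_iff_adj.mpr a2, dist_eq_one_iff_adj.mpr a3⟩
    · obtain ⟨u, a1, a2, a3⟩ := lemC' hinc x z y hy3 (hy1.trans hz1) hz4 hz3 hy4
        (hz2.trans (T.monotone hy2)) hz6 hz5 hy5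
      exact ⟨u, dist_eq_one_iff_adj.mpr a1, dist_eq_one_iff_adj.mpr a3, dist_eq_one_iff_adj.mpr a2⟩
    · obtain ⟨u, a1, a2, a3⟩ := lemC' hinc x y z hz3 (hz1.trans hy1) hy4 hy3 hz4
        (hy2.trans (T.monotone hz2)) hy6 hy5 hz5
      exact ⟨u, dist_eq_one_iff_adj.mpr a1, dist_eq_one_iff_adj.mpr a2, dist_eq_one_iff_adj.mpr a3⟩
    · obtain ⟨u, a1, a2, a3⟩ := lemB' hinc x y z hy4 hz4 hy3
        (hy2.trans (T.monotone hz1)) hz3 (hz2.trans (T.monotone hy1)) hy6 hy5 hz5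
      exact ⟨u, dist_eq_one_iff_adj.mpr a1, dist_eq_one_iff_adj.mpr a2, dist_eq_one_iff_adj.mpr a3⟩
  · -- Q = 3 : t ≤ x
    have hP : P = 0 := by omega
    subst hP
    rw [p0] at ht1
    obtain ⟨hy1, hy2, hy3, hy4, hy5⟩ := classQ3 x t y Mt ht1 pairy hyadj
    obtain ⟨hz1, hz2, hz3, hz4, hz5⟩ := classQ3 x t z Mt ht1 pairz hzadj
    obtain ⟨u, a1, a2, a3⟩ := lemA' hinc x y z hy3 hz3 hy4 hz4
      (hy2.trans (T.monotone hz1)) (hz2.trans (T.monotone hy1)) hy5 hz5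
    exact ⟨u, dist_eq_one_iff_adj.mpr a1, dist_eq_one_iff_adj.mpr a2, dist_eq_one_iff_adj.mpr a3⟩
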